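/- Let n ≥ 3, let G = D_{2n} = ⟨a, b | a^n = b^2 = 1, bab = a^{-1}⟩, and let i be an integer with 2 ≤ i ≤ n-1, gcd(2i-1, n) = 1 and n dividing 2i(i-1). Set C = {b, ba, ba^i, ba^{1-i}} (exponents read modulo n). Then |C| = 4, C is a transitive inverse-closed generating set of G on which Aut(G;C) acts transitively, and: if n ≡ 0 (mod 4) and i ∈ {n/2, n/2+1}, then Aut(G;C) = ⟨τ_{n/2+1}, τ_{n-1}φ⟩ is isomorphic to the dihedral group of order 8; otherwise Aut(G;C) = ⟨τ_{n-1}φ, τ_{2i-1}φ^{1-i}⟩ is isomorphic to Z_2 × Z_2. -/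

import Mathlib

namespace NETCayley

variable {G : Type*} [Group G]

/-- `Aut(G;C)`: the subgroup of `MulAut G` consisting of automorphisms `σ` with `C^σ = C`. -/
def autSub (C : Set G) : Subgroup (MulAut G) where
  carrier := {σ : MulAut G | ⇑σ '' C = C}
  one_mem' := by simp
  mul_mem' := by
    intro a b ha hb
    rw [Set.mem_setOf_eq] at ha hb ⊢
    have h : ⇑(a * b) = ⇑a ∘ ⇑b := rfl
    rw [h, Set.image_comp, hb, ha]
  inv_mem' := by
    intro a ha
    rw [Set.mem_setOf_eq] at ha ⊢
    conv_lhs => rw [← ha]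
    rw [← Set.image_comp]
    have h : ⇑a⁻¹ ∘ ⇑a = id := by funext x; simp
    rw [h, Set.image_id]

/-- `A(G;C)`: proper normal `Aut(G;C)`-invariant subgroups of `G`. -/
def setA (C : Set G) : Set (Subgroup G) :=
  {N | N.Normal ∧ N ≠ ⊤ ∧ ∀ σ ∈ autSub C, N.map (σ : MulAut G).toMonoidHom = N}

/-- `A_max(G;C)`: maximal (by inclusion) elements of `A(G;C)`. -/
def setAmax (C : Set G) : Set (Subgroup G) :=
  {N | N ∈ setA C ∧ ∀ M ∈ setA C, N ≤ M → N = M}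

/-- `Φ(G;C)`: the intersection of all members of `A_max(G;C)`. -/
def PhiC (C : Set G) : Subgroup G := sInf (setAmax C)

/-- `X` is normal `C`-closed: `(x^g)^σ ∈ X` for all `x ∈ X`, `g ∈ G`, `σ ∈ Aut(G;C)`. -/
def NormalCClosed (C X : Set G) : Prop :=
  ∀ x ∈ X, ∀ g : G, ∀ σ ∈ autSub C, σ (g⁻¹ * x * g) ∈ X

/-- The normal `C`-closure of `X`: `{(x^g)^σ : x ∈ X, g ∈ G, σ ∈ Aut(G;C)}`. -/
def normalCClosure (C X : Set G) : Set G :=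
  {y | ∃ x ∈ X, ∃ g : G, ∃ σ ∈ autSub C, σ (g⁻¹ * x * g) = y}

/-- The orbit of `c` under the natural action of `Aut(G;C)`. -/
def orbitC (C : Set G) (c : G) : Set G := {y | ∃ σ ∈ autSub C, σ c = y}

/-- `C` is a transitive set: either `Aut(G;C)` is transitive on `C`, or there are exactly two
orbits `C₊`, `C₋` on `C` with `C = C₊ ∪ C₋` and `C₋ = C₊⁻¹`. -/
def TransSet (C : Set G) : Prop :=
  (∀ c ∈ C, ∀ c' ∈ C, ∃ σ ∈ autSub C, σ c = c') ∨
  (∃ cp ∈ C, ∃ cm ∈ C, orbitC C cp ≠ orbitC C cm ∧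
    C = orbitC C cp ∪ orbitC C cm ∧ orbitC C cm = (orbitC C cp)⁻¹)

/-- A transitive inverse-closed generating set of `G`. -/
def IsTransGenSet (C : Set G) : Prop :=
  (1 : G) ∉ C ∧ (∀ c ∈ C, c⁻¹ ∈ C) ∧ Subgroup.closure C = ⊤ ∧ TransSet C

/-- The map underlying the automorphism `τ_k φ^m` of the dihedral group:
`a^i ↦ a^{ki}`, `b a^i ↦ b a^{ki+m}`. -/
def dihMap (n : ℕ) (k m : ZMod n) : DihedralGroup n → DihedralGroup n
  | .r i => .r (k * i)
  | .sr i => .sr (k * i + m)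

/-- The automorphism `τ_k φ^m` of the dihedral group (for `k` a unit mod `n`). -/
def dihAut (n : ℕ) (k : (ZMod n)ˣ) (m : ZMod n) : MulAut (DihedralGroup n) where
  toFun := dihMap n (k : ZMod n) m
  invFun := dihMap n ((k⁻¹ : (ZMod n)ˣ) : ZMod n) (-(((k⁻¹ : (ZMod n)ˣ) : ZMod n) * m))
  left_inv := by
    have hk : ((k⁻¹ : (ZMod n)ˣ) : ZMod n) * ((k : (ZMod n)ˣ) : ZMod n) = 1 := k.inv_mul
    rintro (i | i) <;> simp only [dihMap] <;> congr 1 <;> linear_combination (i : ZMod n) * hk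
  right_inv := by
    have hk : ((k : (ZMod n)ˣ) : ZMod n) * ((k⁻¹ : (ZMod n)ˣ) : ZMod n) = 1 := k.mul_inv
    rintro (i | i) <;> simp only [dihMap] <;> congr 1
    · linear_combination (i : ZMod n) * hk
    · linear_combination ((i : ZMod n) - m) * hk
  map_mul' := by
    rintro (i | i) (j | j) <;>
      simp only [DihedralGroup.r_mul_r, DihedralGroup.r_mul_sr, DihedralGroup.sr_mul_r,
        DihedralGroup.sr_mul_sr, dihMap] <;> congr 1 <;> ring

open DihedralGroup

theorem dihAut_apply_r (n : ℕ) (k : (ZMod n)ˣ) (m j : ZMod n) :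
    dihAut n k m (r j) = r ((k : ZMod n) * j) := rfl

theorem dihAut_apply_sr (n : ℕ) (k : (ZMod n)ˣ) (m j : ZMod n) :
    dihAut n k m (sr j) = sr ((k : ZMod n) * j + m) := rfl

theorem dihAut_mul (n : ℕ) (k k' : (ZMod n)ˣ) (m m' : ZMod n) :
    dihAut n k m * dihAut n k' m' = dihAut n (k * k') ((k : ZMod n) * m' + m) := by
  apply MulEquiv.ext
  rintro (j | j) <;>
    simp only [MulAut.mul_apply, dihAut_apply_r, dihAut_apply_sr, Units.val_mul] <;> congr 1 <;> ring

theorem dihAut_ext (n : ℕ) {k k' : (ZMod n)ˣ} {m m' : ZMod n} (h1 : (k : ZMod n) = k')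
    (h2 : m = m') : dihAut n k m = dihAut n k' m' := by
  obtain rfl : k = k' := Units.ext h1
  rw [h2]

theorem dihAut_one (n : ℕ) : dihAut n 1 0 = 1 := by
  apply MulEquiv.ext
  rintro (j | j) <;> simp [dihAut_apply_r, dihAut_apply_sr]

theorem dihAut_inj (n : ℕ) {k k' : (ZMod n)ˣ} {m m' : ZMod n}
    (h : dihAut n k m = dihAut n k' m') : (k : ZMod n) = (k' : ZMod n) ∧ m = m' := by
  have h1 := congrArg (fun f : MulAut (DihedralGroup n) => f (sr 0)) h
  have h2 := congrArg (fun f : MulAut (DihedralGroup n) => f (r 1)) h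
  simp only [dihAut_apply_r, dihAut_apply_sr, mul_zero, zero_add, mul_one, sr.injEq, r.injEq] at h1 h2
  exact ⟨h2, h1⟩

theorem pow_mod_eq {M : Type*} [Monoid M] (z : M) (d : ℕ) (hz : z ^ d = 1) (a : ℕ) :
    z ^ (a % d) = z ^ a := by
  conv_rhs => rw [← Nat.div_add_mod a d, pow_add, pow_mul, hz, one_pow, one_mul]
theorem classify {n : ℕ} (I k k' m : ZMod n)
    (hkk : k * k' = 1)
    (F0 : 2*I*(I-1) = 0) (F1 : I ≠ 0) (F2 : I ≠ 1) (F3 : 2*I ≠ 1) (F4 : (2:ZMod n) ≠ 0)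
    (hm : m = 0 ∨ m = 1 ∨ m = I ∨ m = 1 - I)
    (ht : k + m = 0 ∨ k + m = 1 ∨ k + m = I ∨ k + m = 1 - I)
    (hp : k * I + m = 0 ∨ k * I + m = 1 ∨ k * I + m = I ∨ k * I + m = 1 - I)
    (hq : k * (1 - I) + m = 0 ∨ k * (1 - I) + m = 1 ∨ k * (1 - I) + m = I ∨
      k * (1 - I) + m = 1 - I) :
    ((k = 1 ∧ m = 0) ∨ (k = -1 ∧ m = 1) ∨ (k = 1 - 2*I ∧ m = I) ∨ (k = 2*I - 1 ∧ m = 1 - I)) ∨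
    (2*I = 2 ∧ I*I = 1 ∧
      ((k = I ∧ m = 0) ∨ (k = -I ∧ m = I) ∨ (k = -I ∧ m = 1) ∨ (k = I ∧ m = 1 - I))) ∨
    (2*I = 0 ∧ I*I = 0 ∧
      ((k = 1 - I ∧ m = 0) ∨ (k = I - 1 ∧ m = 1 - I) ∨ (k = I - 1 ∧ m = 1) ∨
        (k = 1 - I ∧ m = I))) := by
  have hcan : ∀ x : ZMod n, k * x = 0 → x = 0 := fun x hx => by
    linear_combination k' * hx - x * hkk
  rcases hm with rfl | rfl | hmI | rfl
  · -- m = 0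
    rcases ht with ht | ht | ht | ht
    · exact absurd (by linear_combination I * hcan 1 (by linear_combination ht) : I = 0) F1
    · -- (0,1)
      obtain rfl : k = 1 - 0 := by linear_combination ht
      exact Or.inl (Or.inl ⟨by ring, by ring⟩)
    · -- (0,I)
      obtain rfl : k = I - 0 := by linear_combination ht
      rcases hp with hp | hp | hp | hp
      · exact absurd (hcan I (by linear_combination hp)) F1
      · rcases hq with hq | hq | hq | hq
        · exact absurd (by linear_combination hq + hp : I = 1) F2
        · exact absurd (by linear_combination (-I)*hq + (1-I)*hp : 2*I = 1) F3
        · exact absurd (by linear_combination (-I)*hq + (-I)*hp : I = 0) F1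
        · exact Or.inr (Or.inl ⟨by linear_combination hq + hp, by linear_combination hp,
            Or.inl ⟨by ring, by ring⟩⟩)
      · exact absurd (by linear_combination hcan (I-1) (by linear_combination hp) : I = 1) F2
      · rcases hq with hq | hq | hq | hq
        · exact absurd (by linear_combination hq + hp : 2*I = 1) F3
        · exact absurd (by linear_combination (-2)*hq - F0 : (2:ZMod n) = 0) F4
        · exact absurd (by linear_combination hp + hq : I = 1) F2
        · exact absurd (by linear_combination hp - F0 - hq : I = 0) F1
    · -- (0,1-I)
      obtain rfl : k = 1 - I - 0 := by linear_combination ht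
      rcases hp with hp | hp | hp | hp
      · exact absurd (hcan I (by linear_combination hp)) F1
      · exact absurd (by linear_combination (-2)*hp - F0 : (2:ZMod n) = 0) F4
      · rcases hq with hq | hq | hq | hq
        · exact absurd (by linear_combination I*hq - I*hp - I*F0 : I = 0) F1
        · exact Or.inr (Or.inr ⟨by linear_combination (-2)*hp - F0, by linear_combination -hp,
            Or.inl ⟨by ring, by ring⟩⟩)
        · exact absurd (by linear_combination -hq + hp + F0 : I = 1) F2
        · exact absurd (by linear_combination -hq - hp : I = 0) F1
      · exact absurd (by linear_combination hcan (I-1) (by linear_combination hp) : I = 1) F2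
  · -- m = 1
    rcases ht with ht | ht | ht | ht
    · -- (1,0)
      obtain rfl : k = 0 - 1 := by linear_combination ht
      exact Or.inl (Or.inr (Or.inl ⟨by ring, by ring⟩))
    · exact absurd (by linear_combination I * hcan 1 (by linear_combination ht) : I = 0) F1
    · -- (1,I)
      obtain rfl : k = I - 1 := by linear_combination ht
      rcases hp with hp | hp | hp | hp
      · exact absurd (by linear_combination 2*hp - F0 : (2:ZMod n) = 0) F4
      · exact absurd (hcan I (by linear_combination hp)) F1
      · exact absurd (by linear_combination hcan (I-1) (by linear_combination hp) : I = 1) F2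
      · rcases hq with hq | hq | hq | hq
        · exact Or.inr (Or.inr ⟨by linear_combination 2*hp - F0, by linear_combination hp,
            Or.inr (Or.inr (Or.inl ⟨by ring, by ring⟩))⟩)
        · exact absurd (by linear_combination -(hcan (1-I) (by linear_combination hq)) : I = 1) F2
        · exact absurd (hcan I (by linear_combination -hq)) F1
        · exact absurd (by linear_combination hq - hp + F0 : I = 1) F2
    · -- (1,1-I)
      obtain rfl : k = 1 - I - 1 := by linear_combination ht
      rcases hp with hp | hp | hp | hp
      · rcases hq with hq | hq | hq | hq
        · exact absurd (by linear_combination I*hq + (I-1)*hp : 2*I = 1) F3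
        · exact absurd (by linear_combination -(hcan (1-I) (by linear_combination hq)) : I = 1) F2
        · exact Or.inr (Or.inl ⟨by linear_combination -hq - hp, by linear_combination -hp,
            Or.inr (Or.inr (Or.inl ⟨by ring, by ring⟩))⟩)
        · exact absurd (by linear_combination I*hq + I*hp : I = 0) F1
      · exact absurd (hcan I (by linear_combination hp)) F1
      · rcases hq with hq | hq | hq | hq
        · exact absurd (by linear_combination 2*hq - F0 : (2:ZMod n) = 0) F4
        · exact absurd (by linear_combination -(hcan (1-I) (by linear_combination hq)) : I = 1) F2
        · exact absurd (by linear_combination hq - hp - F0 : I = 0) F1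
        · exact absurd (hcan I (by linear_combination -hq)) F1
      · exact absurd (by linear_combination hcan (I-1) (by linear_combination hp) : I = 1) F2
  · -- m = I
    obtain rfl : m = I - 0 := by linear_combination hmI
    rcases ht with ht | ht | ht | ht
    · -- (I,0)
      obtain rfl : k = 0 - I := by linear_combination ht
      rcases hp with hp | hp | hp | hp
      · exact absurd (by linear_combination hcan (I-1) (by linear_combination hp) : I = 1) F2
      · exact absurd (by linear_combination (-2)*hp - F0 : (2:ZMod n) = 0) F4
      · exact absurd (hcan I (by linear_combination hp)) F1
      · rcases hq with hq | hq | hq | hq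
        · exact absurd (by linear_combination hp + hq : 2*I = 1) F3
        · exact Or.inr (Or.inl ⟨by linear_combination hp + hq, by linear_combination hq,
            Or.inr (Or.inl ⟨by ring, by ring⟩)⟩)
        · exact absurd (by linear_combination -(hcan (1-I) (by linear_combination hq)) : I = 1) F2
        · exact absurd (by linear_combination hq - hp - F0 : I = 0) F1
    · -- (I,1)
      obtain rfl : k = 1 - I := by linear_combination ht
      rcases hp with hp | hp | hp | hp
      · rcases hq with hq | hq | hq | hq
        · exact absurd (by linear_combination 2*hq - F0 : (2:ZMod n) = 0) F4
        · exact absurd (hcan I (by linear_combination -hq)) F1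
        · exact absurd (by linear_combination -(hcan (1-I) (by linear_combination hq)) : I = 1) F2
        · exact Or.inr (Or.inr ⟨by linear_combination F0 + 2*hp, by linear_combination F0 + hp,
            Or.inr (Or.inr (Or.inr ⟨by ring, by ring⟩))⟩)
      · exact absurd (by linear_combination hcan (I-1) (by linear_combination hp) : I = 1) F2
      · exact absurd (hcan I (by linear_combination hp)) F1
      · rcases hq with hq | hq | hq | hq
        · exact absurd (by linear_combination 2*hq - F0 : (2:ZMod n) = 0) F4
        · exact absurd (hcan I (by linear_combination -hq)) F1
        · exact absurd (by linear_combination -(hcan (1-I) (by linear_combination hq)) : I = 1) F2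
        · exact absurd (by linear_combination hp - hq + F0 : I = 1) F2
    · exact absurd (by linear_combination I * hcan 1 (by linear_combination ht) : I = 0) F1
    · -- (I,1-I)
      obtain rfl : k = 1 - I - I := by linear_combination ht
      exact Or.inl (Or.inr (Or.inr (Or.inl ⟨by ring, by ring⟩)))
  · -- m = 1-I
    rcases ht with ht | ht | ht | ht
    · -- (1-I,0)
      obtain rfl : k = 0 - (1 - I) := by linear_combination ht
      rcases hp with hp | hp | hp | hp
      · exact absurd (by linear_combination hcan (I-1) (by linear_combination hp) : I = 1) F2
      · rcases hq with hq | hq | hq | hq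
        · exact absurd (hcan I (by linear_combination -hq)) F1
        · exact absurd (by linear_combination hq + F0 - hp : I = 1) F2
        · exact Or.inr (Or.inr ⟨by linear_combination F0 - 2*hp, by linear_combination F0 - hp,
            Or.inr (Or.inl ⟨by ring, by ring⟩)⟩)
        · exact absurd (by linear_combination -(hcan (1-I) (by linear_combination hq)) : I = 1) F2
      · rcases hq with hq | hq | hq | hq
        · exact absurd (hcan I (by linear_combination -hq)) F1
        · exact absurd (by linear_combination (-2)*hq - F0 : (2:ZMod n) = 0) F4
        · exact absurd (by linear_combination hq - hp + F0 : I = 1) F2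
        · exact absurd (by linear_combination -(hcan (1-I) (by linear_combination hq)) : I = 1) F2
      · exact absurd (hcan I (by linear_combination hp)) F1
    · -- (1-I,1)
      obtain rfl : k = 1 - (1 - I) := by linear_combination ht
      rcases hp with hp | hp | hp | hp
      · exact absurd (by linear_combination 2*hp - F0 : (2:ZMod n) = 0) F4
      · exact absurd (by linear_combination hcan (I-1) (by linear_combination hp) : I = 1) F2
      · rcases hq with hq | hq | hq | hq
        · exact Or.inr (Or.inl ⟨by linear_combination -hp - hq, by linear_combination -hq,
            Or.inr (Or.inr (Or.inr ⟨by ring, by ring⟩))⟩)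
        · exact absurd (by linear_combination -hp - hq : 2*I = 1) F3
        · exact absurd (by linear_combination hp - F0 - hq : I = 0) F1
        · exact absurd (by linear_combination -(hcan (1-I) (by linear_combination hq)) : I = 1) F2
      · exact absurd (hcan I (by linear_combination hp)) F1
    · -- (1-I,I)
      obtain rfl : k = I - (1 - I) := by linear_combination ht
      exact Or.inl (Or.inr (Or.inr (Or.inr ⟨by ring, by ring⟩)))
    · exact absurd (by linear_combination I * hcan 1 (by linear_combination ht) : I = 0) F1
theorem r_pow (n : ℕ) (a : ZMod n) (p : ℕ) : (r a : DihedralGroup n) ^ p = r (a * (p : ZMod n)) := by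
  induction p with
  | zero => simp [one_def, -r_zero]
  | succ p ih =>
      rw [pow_succ, ih, r_mul_r]
      congr 1
      push_cast
      ring

theorem autSub_shape {n : ℕ} [NeZero n] {C : Set (DihedralGroup n)}
    (h0 : sr 0 ∈ C) (h1 : sr 1 ∈ C) (hC : ∀ c ∈ C, ∃ j : ZMod n, c = sr j)
    {σ : MulAut (DihedralGroup n)} (hσ : ⇑σ '' C = C) :
    ∃ k m : ZMod n, (∀ j, σ (r j) = r (k * j)) ∧ (∀ j, σ (sr j) = sr (k * j + m)) := by
  have himg : ∀ c ∈ C, σ c ∈ C := fun c hc => hσ ▸ Set.mem_image_of_mem σ hc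
  obtain ⟨m, hm⟩ := hC _ (himg _ h0)
  obtain ⟨t, ht⟩ := hC _ (himg _ h1)
  have hr1 : σ (r 1) = r (t - m) := by
    have h : (r 1 : DihedralGroup n) = sr 0 * sr 1 := by rw [sr_mul_sr, sub_zero]
    rw [h, map_mul, hm, ht, sr_mul_sr]
  have hrj : ∀ j : ZMod n, σ (r j) = r ((t - m) * j) := by
    intro j
    have hj : ((j.val : ℕ) : ZMod n) = j := ZMod.natCast_rightInverse j
    have h : (r j : DihedralGroup n) = (r 1) ^ (j.val) := by
      rw [r_one_pow, hj]
    rw [h, map_pow, hr1, r_pow, hj]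
  refine ⟨t - m, m, hrj, fun j => ?_⟩
  have h : (sr j : DihedralGroup n) = sr 0 * r j := by rw [sr_mul_r, zero_add]
  rw [h, map_mul, hm, hrj, sr_mul_r, add_comm]

theorem autSub_form {n : ℕ} [NeZero n] {C : Set (DihedralGroup n)}
    (h0 : sr 0 ∈ C) (h1 : sr 1 ∈ C) (hC : ∀ c ∈ C, ∃ j : ZMod n, c = sr j)
    {σ : MulAut (DihedralGroup n)} (hσ : σ ∈ autSub C) :
    ∃ (u : (ZMod n)ˣ) (m : ZMod n), σ = dihAut n u m ∧
      ∀ v : ZMod n, sr v ∈ C → sr ((u : ZMod n) * v + m) ∈ C := by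
  have hσ' : ⇑σ '' C = C := hσ
  have hσi : σ⁻¹ ∈ autSub C := (autSub C).inv_mem hσ
  have hσi' : ⇑σ⁻¹ '' C = C := hσi
  obtain ⟨k, m, hr, hsr⟩ := autSub_shape h0 h1 hC hσ'
  obtain ⟨k2, m2, hr2, _⟩ := autSub_shape h0 h1 hC hσi'
  have hkk : k * k2 = 1 := by
    have h : σ (σ⁻¹ (r 1)) = r 1 := by
      rw [MulAut.inv_def]; exact σ.apply_symm_apply _
    rw [hr2, hr] at h
    rw [mul_one] at h
    exact (r.injEq _ _).mp h
  refine ⟨⟨k, k2, hkk, by rw [mul_comm]; exact hkk⟩, m, ?_, fun v hv => ?_⟩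
  · apply MulEquiv.ext
    rintro (j | j)
    · rw [hr j]; rfl
    · rw [hsr j]; rfl
  · have := hσ' ▸ Set.mem_image_of_mem σ hv
    rwa [hsr v] at this
theorem klein_hom {M : Type*} [Group M] (x y : M) (hx : x*x = 1) (hy : y*y = 1)
    (hc : x*y = y*x) :
    ∃ F : Multiplicative (ZMod 2) × Multiplicative (ZMod 2) →* M,
      ∀ p, F p = x ^ (Multiplicative.toAdd p.1).val * y ^ (Multiplicative.toAdd p.2).val := by
  have hx2 : x^2 = 1 := by rw [pow_two]; exact hx
  have hy2 : y^2 = 1 := by rw [pow_two]; exact hy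
  have hcomm : Commute y x := hc.symm
  refine ⟨⟨⟨fun p => x ^ (Multiplicative.toAdd p.1).val * y ^ (Multiplicative.toAdd p.2).val,
    ?_⟩, ?_⟩, fun p => rfl⟩
  · show x ^ (Multiplicative.toAdd (1 : Multiplicative (ZMod 2))).val * _ = 1
    simp
  · intro p q
    show x ^ (Multiplicative.toAdd (p.1 * q.1)).val * y ^ (Multiplicative.toAdd (p.2 * q.2)).val
      = _
    rw [toAdd_mul, toAdd_mul, ZMod.val_add, ZMod.val_add, pow_mod_eq x 2 hx2,
      pow_mod_eq y 2 hy2, pow_add, pow_add]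
    simp only [mul_assoc]
    congr 1
    rw [← mul_assoc, ← mul_assoc, hcomm.pow_pow]

theorem klein_iso {M : Type*} [Group M] (x y : M) (H : Subgroup M)
    (hx : x*x = 1) (hy : y*y = 1) (hc : x*y = y*x)
    (hx1 : x ≠ 1) (hy1 : y ≠ 1) (hxy1 : x*y ≠ 1)
    (hxH : x ∈ H) (hyH : y ∈ H)
    (hcover : ∀ h ∈ H, h = 1 ∨ h = x ∨ h = y ∨ h = x*y) :
    H = Subgroup.closure {x, y} ∧
      Nonempty (H ≃* Multiplicative (ZMod 2) × Multiplicative (ZMod 2)) := by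
  obtain ⟨F, hF⟩ := klein_hom x y hx hy hc
  have h2 : ∀ c : ZMod 2, c = 0 ∨ c = 1 := by decide
  have hxr : x ∈ F.range := by
    refine ⟨(Multiplicative.ofAdd 1, Multiplicative.ofAdd 0), ?_⟩
    rw [hF]; simp [show ((1:ZMod 2)).val = 1 from rfl]
  have hyr : y ∈ F.range := by
    refine ⟨(Multiplicative.ofAdd 0, Multiplicative.ofAdd 1), ?_⟩
    rw [hF]; simp [show ((1:ZMod 2)).val = 1 from rfl]
  have hxyr : x*y ∈ F.range := by
    refine ⟨(Multiplicative.ofAdd 1, Multiplicative.ofAdd 1), ?_⟩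
    rw [hF]; simp [show ((1:ZMod 2)).val = 1 from rfl]
  have hrange : F.range = H := by
    apply le_antisymm
    · rintro _ ⟨p, rfl⟩
      rw [hF]
      exact mul_mem (pow_mem hxH _) (pow_mem hyH _)
    · intro h hh
      rcases hcover h hh with rfl | rfl | rfl | rfl
      · exact one_mem _
      · exact hxr
      · exact hyr
      · exact hxyr
  have hinj : Function.Injective F := by
    rw [injective_iff_map_eq_one]
    rintro ⟨a, b⟩ hp
    rw [hF] at hp
    rcases h2 (Multiplicative.toAdd a) with ha | ha <;>
      rcases h2 (Multiplicative.toAdd b) with hb | hb <;> rw [ha, hb] at hp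
    · have ha' : a = 1 := by
        rw [← ofAdd_toAdd a, ha]; rfl
      have hb' : b = 1 := by
        rw [← ofAdd_toAdd b, hb]; rfl
      rw [ha', hb']; rfl
    · exact absurd (by simpa [show ((1:ZMod 2)).val = 1 from rfl] using hp) hy1
    · exact absurd (by simpa [show ((1:ZMod 2)).val = 1 from rfl] using hp) hx1
    · exact absurd (by simpa [show ((1:ZMod 2)).val = 1 from rfl] using hp) hxy1
  constructor
  · apply le_antisymm
    · intro h hh
      rcases hcover h hh with rfl | rfl | rfl | rfl
      · exact one_mem _
      · exact Subgroup.subset_closure (Set.mem_insert _ _)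
      · exact Subgroup.subset_closure (Set.mem_insert_of_mem _ rfl)
      · exact mul_mem (Subgroup.subset_closure (Set.mem_insert _ _))
          (Subgroup.subset_closure (Set.mem_insert_of_mem _ rfl))
    · rw [Subgroup.closure_le]
      rintro t (rfl | rfl)
      · exact hxH
      · exact hyH
  · exact ⟨(MulEquiv.subgroupCongr hrange.symm).trans (MonoidHom.ofInjective hinj).symm⟩
theorem d4_hom {M : Type*} [Group M] (x z : M) (hx : x*x = 1) (hz : z^4 = 1)
    (hzx : z*x = x*z^3) :
    ∃ F : DihedralGroup 4 →* M,
      (∀ j : ZMod 4, F (r j) = z ^ j.val) ∧ (∀ j : ZMod 4, F (sr j) = x * z ^ j.val) := by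
  have hpow : ∀ a : ℕ, z^a * x = x * z^(3*a) := by
    intro a
    induction a with
    | zero => simp
    | succ a ih =>
        rw [pow_succ, mul_assoc, hzx, ← mul_assoc, ih, mul_assoc, ← pow_add]
        congr 2
        try ring
  have hval3 : ∀ a b : ZMod 4, (b - a).val % 4 = (3 * a.val + b.val) % 4 := by decide
  have hexp : ∀ a b : ZMod 4, z ^ (b - a).val = z ^ (3 * a.val + b.val) := by
    intro a b
    rw [← pow_mod_eq z 4 hz (b-a).val, ← pow_mod_eq z 4 hz (3*a.val + b.val), hval3]
  have hvadd : ∀ a b : ZMod 4, z ^ (a + b).val = z ^ a.val * z ^ b.val := by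
    intro a b
    rw [ZMod.val_add, pow_mod_eq z 4 hz, pow_add]
  refine ⟨⟨⟨fun g => match g with
    | DihedralGroup.r j => z^j.val
    | DihedralGroup.sr j => x*z^j.val, ?_⟩, ?_⟩, fun j => rfl, fun j => rfl⟩
  · show z ^ (0 : ZMod 4).val = 1
    norm_num
  · rintro (a | a) (b | b)
    · show z ^ (a + b).val = z ^ a.val * z ^ b.val
      exact hvadd a b
    · show x * z ^ (b - a).val = z ^ a.val * (x * z ^ b.val)
      rw [hexp, ← mul_assoc, hpow, mul_assoc, ← pow_add]
    · show x * z ^ (a + b).val = x * z ^ a.val * z ^ b.val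
      rw [hvadd, mul_assoc]
    · show z ^ (b - a).val = x * z ^ a.val * (x * z ^ b.val)
      rw [hexp, mul_assoc, ← mul_assoc (z ^ a.val), hpow, ← mul_assoc, ← mul_assoc, hx,
        one_mul, ← pow_add]

theorem d4_iso {M : Type*} [Group M] (x y : M) (H : Subgroup M)
    (hx : x*x = 1) (hy : y*y = 1) (hz4 : (x*y)^4 = 1) (hz2 : (x*y)^2 ≠ 1)
    (hx1 : x ≠ 1) (hy1 : y ≠ 1) (hxz2 : x*(x*y)^2 ≠ 1) (hxz3 : x*(x*y)^3 ≠ 1)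
    (hxH : x ∈ H) (hyH : y ∈ H)
    (hcover : ∀ h ∈ H, h = 1 ∨ h = x*y ∨ h = (x*y)^2 ∨ h = (x*y)^3 ∨
      h = x ∨ h = y ∨ h = x*(x*y)^2 ∨ h = x*(x*y)^3) :
    H = Subgroup.closure {x, y} ∧ Nonempty (H ≃* DihedralGroup 4) := by
  set z := x*y with hzdef
  have hz1 : z ≠ 1 := fun h => hz2 (by rw [h]; simp)
  have hz3 : z^3 ≠ 1 := by
    intro h
    have h4 := hz4
    rw [show (4:ℕ) = 3+1 from rfl, pow_succ, h, one_mul] at h4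
    exact hz1 h4
  have hxz1 : x*z = y := by rw [hzdef, ← mul_assoc, hx, one_mul]
  have hzx : z*x = x*z^3 := by
    have h1 : z*x*z = x := by
      rw [hzdef, show x*y*x*(x*y) = x*y*(x*x)*y by group, hx, mul_one,
        show x*y*y = x*(y*y) by group, hy, mul_one]
    have h3 : z^3 = z⁻¹ := by
      apply eq_inv_of_mul_eq_one_left
      rw [← pow_succ]; exact hz4
    rw [h3]
    exact eq_mul_inv_of_mul_eq h1
  obtain ⟨F, hFr, hFsr⟩ := d4_hom x z hx hz4 hzx
  have hmemz : z ∈ H := by rw [hzdef]; exact mul_mem hxH hyH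
  have hrange : F.range = H := by
    apply le_antisymm
    · rintro _ ⟨g, rfl⟩
      rcases g with j | j
      · rw [hFr]; exact pow_mem hmemz _
      · rw [hFsr]; exact mul_mem hxH (pow_mem hmemz _)
    · intro h hh
      rcases hcover h hh with rfl | rfl | rfl | rfl | rfl | rfl | rfl | rfl
      · exact ⟨r 0, by rw [hFr, show ((0 : ZMod 4)).val = 0 from rfl, pow_zero]⟩
      · exact ⟨r 1, by rw [hFr, show ((1 : ZMod 4)).val = 1 from rfl, pow_one]⟩
      · exact ⟨r 2, by rw [hFr, show ((2 : ZMod 4)).val = 2 from rfl]⟩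
      · exact ⟨r 3, by rw [hFr, show ((3 : ZMod 4)).val = 3 from rfl]⟩
      · exact ⟨sr 0, by rw [hFsr, show ((0 : ZMod 4)).val = 0 from rfl, pow_zero, mul_one]⟩
      · exact ⟨sr 1, by rw [hFsr, show ((1 : ZMod 4)).val = 1 from rfl, pow_one, hxz1]⟩
      · exact ⟨sr 2, by rw [hFsr, show ((2 : ZMod 4)).val = 2 from rfl]⟩
      · exact ⟨sr 3, by rw [hFsr, show ((3 : ZMod 4)).val = 3 from rfl]⟩
  have h4 : ∀ c : ZMod 4, c = 0 ∨ c = 1 ∨ c = 2 ∨ c = 3 := by decide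
  have hinj : Function.Injective F := by
    rw [injective_iff_map_eq_one]
    rintro (j | j) hp
    · rcases h4 j with rfl | rfl | rfl | rfl
      · rfl
      · rw [hFr, show ((1 : ZMod 4)).val = 1 from rfl, pow_one] at hp; exact absurd hp hz1
      · rw [hFr, show ((2 : ZMod 4)).val = 2 from rfl] at hp; exact absurd hp hz2
      · rw [hFr, show ((3 : ZMod 4)).val = 3 from rfl] at hp; exact absurd hp hz3
    · rcases h4 j with rfl | rfl | rfl | rfl
      · rw [hFsr, show ((0 : ZMod 4)).val = 0 from rfl, pow_zero, mul_one] at hp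
        exact absurd hp hx1
      · rw [hFsr, show ((1 : ZMod 4)).val = 1 from rfl, pow_one, hxz1] at hp
        exact absurd hp hy1
      · rw [hFsr, show ((2 : ZMod 4)).val = 2 from rfl] at hp; exact absurd hp hxz2
      · rw [hFsr, show ((3 : ZMod 4)).val = 3 from rfl] at hp; exact absurd hp hxz3
  constructor
  · apply le_antisymm
    · intro h hh
      have hxc : x ∈ Subgroup.closure ({x, y} : Set M) :=
        Subgroup.subset_closure (Set.mem_insert _ _)
      have hyc : y ∈ Subgroup.closure ({x, y} : Set M) :=
        Subgroup.subset_closure (Set.mem_insert_of_mem _ rfl)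
      have hzc : z ∈ Subgroup.closure ({x, y} : Set M) := mul_mem hxc hyc
      rcases hcover h hh with rfl | rfl | rfl | rfl | rfl | rfl | rfl | rfl
      · exact one_mem _
      · exact hzc
      · exact pow_mem hzc 2
      · exact pow_mem hzc 3
      · exact hxc
      · exact hyc
      · exact mul_mem hxc (pow_mem hzc 2)
      · exact mul_mem hxc (pow_mem hzc 3)
    · rw [Subgroup.closure_le]
      rintro t (rfl | rfl)
      · exact hxH
      · exact hyH
  · exact ⟨(MulEquiv.subgroupCongr hrange.symm).trans (MonoidHom.ofInjective hinj).symm⟩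
theorem generic_branch {n : ℕ} [NeZero n] (C : Set (DihedralGroup n)) (I : ZMod n)
    (w : (ZMod n)ˣ)
    (hCdef : C = {sr 0, sr 1, sr I, sr (1-I)})
    (hw2 : (w : ZMod n) = 2*I - 1)
    (F0 : 2*I*(I-1) = 0) (F1 : I ≠ 0) (F2 : I ≠ 1) (F3 : 2*I ≠ 1) (F4 : (2:ZMod n) ≠ 0)
    (h10 : (1 : ZMod n) ≠ 0)
    (hno2 : ¬(2*I = 2 ∧ I*I = 1)) (hno3 : ¬(2*I = 0 ∧ I*I = 0))
    (haC : dihAut n (-1) 1 ∈ autSub C) (hbC : dihAut n w (1-I) ∈ autSub C) :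
    autSub C = Subgroup.closure {dihAut n (-1) 1, dihAut n w (1 - I)} ∧
      Nonempty (autSub C ≃* Multiplicative (ZMod 2) × Multiplicative (ZMod 2)) := by
  have hanv : ((-1 : (ZMod n)ˣ) : ZMod n) = -1 := by simp
  have habv : ((-w : (ZMod n)ˣ) : ZMod n) = 1 - 2*I := by
    rw [Units.val_neg, hw2]; ring
  set a := dihAut n (-1) 1 with hadef
  set b := dihAut n w (1-I) with hbdef
  have hab : a * b = dihAut n (-w) I := by
    rw [hadef, hbdef, dihAut_mul]
    exact dihAut_ext n (by simp) (by rw [hanv]; ring)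
  have h0C : sr 0 ∈ C := by rw [hCdef]; left; rfl
  have h1C : sr 1 ∈ C := by rw [hCdef]; right; left; rfl
  have hCsr : ∀ c ∈ C, ∃ j : ZMod n, c = sr j := by
    rw [hCdef]; rintro c (rfl | rfl | rfl | rfl) <;> exact ⟨_, rfl⟩
  have hCmem : ∀ v : ZMod n, sr v ∈ C ↔ (v = 0 ∨ v = 1 ∨ v = I ∨ v = 1 - I) := by
    intro v
    rw [hCdef]
    simp [DihedralGroup.sr.injEq]
  have hiC : sr I ∈ C := (hCmem I).mpr (by tauto)
  have hniC : sr (1-I) ∈ C := (hCmem (1-I)).mpr (by tauto)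
  -- the cover
  have hcover : ∀ σ ∈ autSub C, σ = 1 ∨ σ = a ∨ σ = b ∨ σ = a*b := by
    intro σ hσ
    obtain ⟨u', m, rfl, hmem⟩ := autSub_form h0C h1C hCsr hσ
    have hkk : (u' : ZMod n) * ((u'⁻¹ : (ZMod n)ˣ) : ZMod n) = 1 := u'.mul_inv
    have c0 := (hCmem _).mp (hmem 0 h0C)
    have c1 := (hCmem _).mp (hmem 1 h1C)
    have cI := (hCmem _).mp (hmem I hiC)
    have cN := (hCmem _).mp (hmem (1-I) hniC)
    rw [mul_zero, zero_add] at c0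
    rw [mul_one] at c1
    have := classify I (u' : ZMod n) ((u'⁻¹ : (ZMod n)ˣ) : ZMod n) m hkk F0 F1 F2 F3 F4
      c0 c1 cI cN
    rcases this with (⟨h1, h2⟩ | ⟨h1, h2⟩ | ⟨h1, h2⟩ | ⟨h1, h2⟩) | ⟨hc, hc', _⟩ | ⟨hc, hc', _⟩
    · left
      rw [h2]
      exact (dihAut_ext n (by rw [h1, Units.val_one]) rfl).trans (dihAut_one n)
    · right; left
      rw [h2, hadef]
      exact dihAut_ext n (by rw [h1, hanv]) rfl
    · right; right; right
      rw [h2, hab]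
      exact dihAut_ext n (by rw [h1, habv]) rfl
    · right; right; left
      rw [h2, hbdef]
      exact dihAut_ext n (by rw [h1, hw2]) rfl
    · exact absurd ⟨hc, hc'⟩ hno2
    · exact absurd ⟨hc, hc'⟩ hno3
  -- Klein relations
  have haa : a * a = 1 := by
    rw [hadef, dihAut_mul]
    refine (dihAut_ext n ?_ ?_).trans (dihAut_one n)
    · rw [Units.val_mul, hanv, Units.val_one]; ring
    · rw [hanv]; ring
  have hbb : b * b = 1 := by
    rw [hbdef, dihAut_mul]
    refine (dihAut_ext n ?_ ?_).trans (dihAut_one n)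
    · rw [Units.val_mul, hw2, Units.val_one]; linear_combination 2*F0
    · rw [hw2]; linear_combination -F0
  have hcomm : a * b = b * a := by
    rw [hab, hbdef, hadef, dihAut_mul]
    refine dihAut_ext n ?_ ?_
    · rw [Units.val_mul, hw2, Units.val_neg, hw2, hanv]; ring
    · rw [hw2]; ring
  have hane : a ≠ 1 := by
    intro h
    exact h10 (dihAut_inj n (h.trans (dihAut_one n).symm)).2
  have hbne : b ≠ 1 := by
    intro h
    have := (dihAut_inj n (h.trans (dihAut_one n).symm)).2
    exact F2 (by linear_combination -this)
  have habne : a*b ≠ 1 := by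
    intro h
    rw [hab] at h
    exact F1 (dihAut_inj n (h.trans (dihAut_one n).symm)).2
  exact klein_iso a b (autSub C) haa hbb hcomm hane hbne habne haC hbC hcover
theorem autSub_of_invol {n : ℕ} {C : Set (DihedralGroup n)} {a b c d : ZMod n}
    (hC : C = {sr a, sr b, sr c, sr d}) (σ : MulAut (DihedralGroup n)) (hσ2 : σ * σ = 1)
    (h1 : σ (sr a) ∈ C) (h2 : σ (sr b) ∈ C) (h3 : σ (sr c) ∈ C) (h4 : σ (sr d) ∈ C) :
    σ ∈ autSub C := by
  have hall : ∀ e ∈ C, σ e ∈ C := by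
    intro e he
    rw [hC] at he
    simp only [Set.mem_insert_iff, Set.mem_singleton_iff] at he
    rcases he with rfl | rfl | rfl | rfl
    · exact h1
    · exact h2
    · exact h3
    · exact h4
  have hsymm : ∀ g, σ (σ g) = g := fun g => by
    have h : (σ * σ) g = (1 : MulAut (DihedralGroup n)) g := by rw [hσ2]
    simpa using h
  show ⇑σ '' C = C
  apply Set.Subset.antisymm
  · rintro _ ⟨e, he, rfl⟩
    exact hall e he
  · intro g hg
    exact ⟨σ g, hall g hg, hsymm g⟩

theorem special_of (n i : ℕ) (hn : 3 ≤ n) (hi1 : 2 ≤ i) (hi2 : i ≤ n - 1) :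
    (2*(i:ZMod n) = 0 ∧ (i:ZMod n)*(i:ZMod n) = 0 → n % 4 = 0 ∧ i = n/2) ∧
    (2*(i:ZMod n) = 2 ∧ (i:ZMod n)*(i:ZMod n) = 1 → n % 4 = 0 ∧ i = n/2 + 1) := by
  have hnz : NeZero n := ⟨by omega⟩
  have hdvdIff : ∀ a : ℕ, ((a : ZMod n) = 0) ↔ n ∣ a := fun a =>
    ZMod.natCast_eq_zero_iff a n
  constructor
  · rintro ⟨h2, hsq⟩
    have d1 : n ∣ 2*i := by
      rw [← hdvdIff]; push_cast; linear_combination h2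
    obtain ⟨c, hc⟩ := d1
    have hc1 : c = 1 := by
      rcases Nat.lt_or_ge c 1 with h | h
      · obtain rfl : c = 0 := by omega
        rw [Nat.mul_zero] at hc; omega
      · rcases Nat.lt_or_ge c 2 with h' | h'
        · omega
        · have h2n : n*2 ≤ 2*i := hc ▸ Nat.mul_le_mul_left n h'
          omega
    subst hc1
    rw [Nat.mul_one] at hc
    have d2 : n ∣ i*i := by
      rw [← hdvdIff]; push_cast; linear_combination hsq
    obtain ⟨d, hd⟩ := d2
    have hii : i * i = i * (2*d) := by
      rw [hd, show n = 2*i by omega]; ring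
    have hi2d : i = 2*d := Nat.eq_of_mul_eq_mul_left (by omega) hii
    exact ⟨by omega, by omega⟩
  · rintro ⟨h2, hsq⟩
    have d1 : n ∣ 2*i - 2 := by
      rw [← hdvdIff, Nat.cast_sub (by omega : 2 ≤ 2*i)]
      push_cast
      linear_combination h2
    obtain ⟨c, hc⟩ := d1
    have hc1 : c = 1 := by
      rcases Nat.lt_or_ge c 1 with h | h
      · obtain rfl : c = 0 := by omega
        rw [Nat.mul_zero] at hc; omega
      · rcases Nat.lt_or_ge c 2 with h' | h'
        · omega
        · have h2n : n*2 ≤ 2*i - 2 := hc ▸ Nat.mul_le_mul_left n h'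
          omega
    subst hc1
    rw [Nat.mul_one] at hc
    have hone : 1 ≤ i*i := le_trans (by norm_num) (Nat.mul_le_mul hi1 hi1)
    have d2 : n ∣ i*i - 1 := by
      rw [← hdvdIff, Nat.cast_sub hone]
      push_cast
      linear_combination hsq
    obtain ⟨d, hd⟩ := d2
    have hii : i*i = n*d + 1 := by
      have := (Nat.sub_eq_iff_eq_add hone).mp hd
      omega
    have hkey : n*(4*d) + 4 = n*(n+4) + 4 := by
      calc n*(4*d) + 4 = 4*(n*d + 1) := by ring
      _ = 4*(i*i) := by rw [hii]
      _ = (2*i)*(2*i) := by ring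
      _ = (n+2)*(n+2) := by rw [show 2*i = n+2 by omega]
      _ = n*(n+4) + 4 := by ring
    have h4d : 4*d = n + 4 :=
      Nat.eq_of_mul_eq_mul_left (by omega : 0 < n) (Nat.add_right_cancel hkey)
    exact ⟨by omega, by omega⟩
theorem special_branch {n : ℕ} [NeZero n] (C : Set (DihedralGroup n)) (H : ZMod n)
    (u : (ZMod n)ˣ) (huv : (u : ZMod n) = H + 1)
    (hCH : C = {sr 0, sr 1, sr H, sr (H+1)})
    (h2H : 2*H = 0) (hHH : H*H = 0) (hH0 : H ≠ 0) (hH1 : H ≠ 1) (hH10 : H + 1 ≠ 0)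
    (h10 : (1 : ZMod n) ≠ 0) (F4 : (2:ZMod n) ≠ 0)
    (hxC : dihAut n u 0 ∈ autSub C) (hyC : dihAut n (-1) 1 ∈ autSub C) :
    autSub C = Subgroup.closure {dihAut n u 0, dihAut n (-1) 1} ∧
      Nonempty (autSub C ≃* DihedralGroup 4) := by
  have hanv : ((-1 : (ZMod n)ˣ) : ZMod n) = -1 := by simp
  have F0H : 2*H*(H-1) = 0 := by linear_combination (H-1)*h2H
  have FH3 : 2*H ≠ 1 := fun h => h10 (by linear_combination h2H - h)
  set x := dihAut n u 0 with hxdef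
  set y := dihAut n (-1) 1 with hydef
  have hz : x*y = dihAut n (-u) (H+1) := by
    rw [hxdef, hydef, dihAut_mul]
    exact dihAut_ext n (by simp) (by rw [huv]; ring)
  have hz2 : (x*y)^2 = dihAut n 1 (H) := by
    rw [pow_two, hz, dihAut_mul]
    refine dihAut_ext n ?_ ?_
    · simp only [Units.val_mul, Units.val_neg, Units.val_one, huv]
      linear_combination hHH + h2H
    · rw [Units.val_neg, huv]
      linear_combination -hHH - h2H
  have hz3 : (x*y)^3 = dihAut n (-u) 1 := by
    rw [pow_succ, hz2, hz, dihAut_mul]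
    refine dihAut_ext n (by rw [one_mul]) ?_
    · rw [Units.val_one]
      linear_combination h2H
  have hz4 : (x*y)^4 = 1 := by
    rw [pow_succ, hz3, hz, dihAut_mul]
    refine (dihAut_ext n ?_ ?_).trans (dihAut_one n)
    · simp only [Units.val_mul, Units.val_neg, Units.val_one, huv]
      linear_combination hHH + h2H
    · rw [Units.val_neg, huv]
      linear_combination -hHH - h2H
  have hxz2 : x*(x*y)^2 = dihAut n u H := by
    rw [hz2, hxdef, dihAut_mul]
    refine dihAut_ext n (by rw [mul_one]) ?_
    · rw [huv]
      linear_combination hHH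
  have hxz3 : x*(x*y)^3 = dihAut n (-1) (H+1) := by
    rw [hz3, hxdef, dihAut_mul]
    refine dihAut_ext n ?_ ?_
    · simp only [Units.val_mul, Units.val_neg, Units.val_one, huv]
      linear_combination -hHH - h2H
    · rw [huv]; ring
  -- basic facts about C
  have h0C : sr 0 ∈ C := by rw [hCH]; left; rfl
  have h1C : sr 1 ∈ C := by rw [hCH]; right; left; rfl
  have hCsr : ∀ c ∈ C, ∃ j : ZMod n, c = sr j := by
    rw [hCH]; rintro c (rfl | rfl | rfl | rfl) <;> exact ⟨_, rfl⟩
  have hCmem : ∀ v : ZMod n, sr v ∈ C ↔ (v = 0 ∨ v = 1 ∨ v = H ∨ v = H + 1) := by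
    intro v
    rw [hCH]
    simp [DihedralGroup.sr.injEq]
  have hNH : (1 - H : ZMod n) = H + 1 := by linear_combination -h2H
  have hconv : ∀ v : ZMod n, (v = 0 ∨ v = 1 ∨ v = H ∨ v = H + 1) →
      (v = 0 ∨ v = 1 ∨ v = H ∨ v = 1 - H) := by
    rintro v (rfl | rfl | rfl | rfl)
    · tauto
    · tauto
    · tauto
    · right; right; right; rw [hNH]
  have hHC : sr H ∈ C := (hCmem H).mpr (by tauto)
  have hH1C : sr (H+1) ∈ C := (hCmem (H+1)).mpr (by tauto)
  -- cover
  have hcover : ∀ σ ∈ autSub C, σ = 1 ∨ σ = x*y ∨ σ = (x*y)^2 ∨ σ = (x*y)^3 ∨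
      σ = x ∨ σ = y ∨ σ = x*(x*y)^2 ∨ σ = x*(x*y)^3 := by
    intro σ hσ
    obtain ⟨u', m, rfl, hmem⟩ := autSub_form h0C h1C hCsr hσ
    have hkk : (u' : ZMod n) * ((u'⁻¹ : (ZMod n)ˣ) : ZMod n) = 1 := u'.mul_inv
    have c0 := hconv _ ((hCmem _).mp (hmem 0 h0C))
    have c1 := hconv _ ((hCmem _).mp (hmem 1 h1C))
    have cH := hconv _ ((hCmem _).mp (hmem H hHC))
    have cN := hconv _ ((hCmem _).mp (hmem (H+1) hH1C))
    rw [mul_zero, zero_add] at c0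
    rw [mul_one] at c1
    have cN' : (u' : ZMod n) * (1 - H) + m = 0 ∨ (u' : ZMod n) * (1 - H) + m = 1 ∨
        (u' : ZMod n) * (1 - H) + m = H ∨ (u' : ZMod n) * (1 - H) + m = 1 - H := by
      rcases cN with h | h | h | h
      · exact Or.inl (by linear_combination h - (u' : ZMod n)*h2H)
      · exact Or.inr (Or.inl (by linear_combination h - (u' : ZMod n)*h2H))
      · exact Or.inr (Or.inr (Or.inl (by linear_combination h - (u' : ZMod n)*h2H)))
      · exact Or.inr (Or.inr (Or.inr (by linear_combination h - (u' : ZMod n)*h2H)))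
    have := classify H (u' : ZMod n) ((u'⁻¹ : (ZMod n)ˣ) : ZMod n) m hkk F0H hH0 hH1 FH3 F4
      c0 c1 cH cN'
    rcases this with (⟨h1, h2⟩ | ⟨h1, h2⟩ | ⟨h1, h2⟩ | ⟨h1, h2⟩) | ⟨hc, _, _⟩ |
      ⟨_, _, (⟨h1, h2⟩ | ⟨h1, h2⟩ | ⟨h1, h2⟩ | ⟨h1, h2⟩)⟩
    · left
      rw [h2]
      exact (dihAut_ext n (by rw [h1, Units.val_one]) rfl).trans (dihAut_one n)
    · right; right; right; right; right; left
      rw [h2, hydef]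
      exact dihAut_ext n (by rw [h1, hanv]) rfl
    · right; right; left
      rw [h2, hz2]
      exact dihAut_ext n (by rw [h1, Units.val_one]; linear_combination -h2H)
        rfl
    · right; right; right; right; right; right; right
      rw [h2, hxz3]
      exact dihAut_ext n (by rw [h1, hanv]; linear_combination h2H)
        (by linear_combination -h2H)
    · exact absurd (by linear_combination h2H - hc : (2:ZMod n) = 0) F4
    · right; right; right; right; left
      rw [h2, hxdef]
      exact dihAut_ext n (by rw [h1, huv]; linear_combination -h2H) rfl
    · right; left
      rw [h2, hz]
      exact dihAut_ext n (by rw [h1, Units.val_neg, huv]; linear_combination h2H)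
        (by linear_combination -h2H)
    · right; right; right; left
      rw [h2, hz3]
      exact dihAut_ext n (by rw [h1, Units.val_neg, huv]; linear_combination h2H) rfl
    · right; right; right; right; right; right; left
      rw [h2, hxz2]
      exact dihAut_ext n (by rw [h1, huv]; linear_combination -h2H) rfl
  -- nonidentity facts
  have hz2ne : (x*y)^2 ≠ 1 := by
    intro h
    rw [hz2] at h
    exact hH0 (dihAut_inj n (h.trans (dihAut_one n).symm)).2
  have hxne : x ≠ 1 := by
    intro h
    rw [hxdef] at h
    have := (dihAut_inj n (h.trans (dihAut_one n).symm)).1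
    rw [huv, Units.val_one] at this
    exact hH0 (by linear_combination this)
  have hyne : y ≠ 1 := by
    intro h
    rw [hydef] at h
    exact h10 (dihAut_inj n (h.trans (dihAut_one n).symm)).2
  have hxz2ne : x*(x*y)^2 ≠ 1 := by
    intro h
    rw [hxz2] at h
    exact hH0 (dihAut_inj n (h.trans (dihAut_one n).symm)).2
  have hxz3ne : x*(x*y)^3 ≠ 1 := by
    intro h
    rw [hxz3] at h
    exact hH10 (dihAut_inj n (h.trans (dihAut_one n).symm)).2
  -- relations
  have hxx : x * x = 1 := by
    rw [hxdef, dihAut_mul]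
    refine (dihAut_ext n ?_ ?_).trans (dihAut_one n)
    · rw [Units.val_mul, huv, Units.val_one]
      linear_combination hHH + h2H
    · rw [huv]; ring
  have hyy : y * y = 1 := by
    rw [hydef, dihAut_mul]
    refine (dihAut_ext n ?_ ?_).trans (dihAut_one n)
    · rw [Units.val_mul, hanv, Units.val_one]; ring
    · rw [hanv]; ring
  exact d4_iso x y (autSub C) hxx hyy hz4 hz2ne hxne hyne hxz2ne hxz3ne hxC hyC hcover
/-- For `2 ≤ i ≤ n-1` with `gcd(2i-1,n) = 1` and `n ∣ 2i(i-1)`, the set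
`C = {b, ba, ba^i, ba^{1-i}}` has size 4, is a transitive inverse-closed generating set on
which `Aut(G;C)` acts transitively, and `Aut(G;C)` is `D₈` if `n ≡ 0 (mod 4)` and
`i ∈ {n/2, n/2+1}`, and `Z₂ × Z₂` otherwise. -/
theorem stmt13 (n : ℕ) (hn : 3 ≤ n) (i : ℕ) (hi1 : 2 ≤ i) (hi2 : i ≤ n - 1)
    (hgcd : Nat.gcd (2 * i - 1) n = 1) (hdvd : n ∣ 2 * i * (i - 1))
    (C : Set (DihedralGroup n))
    (hCdef : C = {DihedralGroup.sr 0, DihedralGroup.sr 1, DihedralGroup.sr (i : ZMod n),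
      DihedralGroup.sr (1 - (i : ZMod n))}) :
    C.ncard = 4 ∧ IsTransGenSet C ∧
    (∀ c ∈ C, ∀ c' ∈ C, ∃ σ ∈ autSub C, σ c = c') ∧
    ((n % 4 = 0 ∧ (i = n / 2 ∨ i = n / 2 + 1)) →
      ∃ u : (ZMod n)ˣ, (u : ZMod n) = ((n / 2 + 1 : ℕ) : ZMod n) ∧
        autSub C = Subgroup.closure {dihAut n u 0, dihAut n (-1) 1} ∧
        Nonempty (autSub C ≃* DihedralGroup 4)) ∧
    (¬(n % 4 = 0 ∧ (i = n / 2 ∨ i = n / 2 + 1)) →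
      ∃ w : (ZMod n)ˣ, (w : ZMod n) = ((2 * i - 1 : ℕ) : ZMod n) ∧
        autSub C = Subgroup.closure {dihAut n (-1) 1, dihAut n w (1 - (i : ZMod n))} ∧
        Nonempty (autSub C ≃* Multiplicative (ZMod 2) × Multiplicative (ZMod 2))) := by
  have hnz : NeZero n := ⟨by omega⟩
  have hdvdIff : ∀ a : ℕ, ((a : ZMod n) = 0) ↔ n ∣ a := fun a =>
    ZMod.natCast_eq_zero_iff a n
  set I := (i : ZMod n) with hIdef
  -- basic numeric facts
  have h10 : (1 : ZMod n) ≠ 0 := by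
    intro h
    have := Nat.le_of_dvd one_pos ((hdvdIff 1).mp (by push_cast; exact h))
    omega
  have F1 : I ≠ 0 := by
    intro h
    have := Nat.le_of_dvd (by omega) ((hdvdIff i).mp h)
    omega
  have F2 : I ≠ 1 := by
    intro h
    have h' : ((i - 1 : ℕ) : ZMod n) = 0 := by
      rw [Nat.cast_sub (by omega : 1 ≤ i)]
      push_cast
      linear_combination h
    have := Nat.le_of_dvd (by omega) ((hdvdIff _).mp h')
    omega
  have F3 : 2*I ≠ 1 := by
    intro h
    have h' : ((2*i - 1 : ℕ) : ZMod n) = 0 := by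
      rw [Nat.cast_sub (by omega : 1 ≤ 2*i)]
      push_cast
      linear_combination h
    have hd := Nat.dvd_gcd ((hdvdIff _).mp h') (dvd_refl n)
    rw [hgcd] at hd
    have := Nat.le_of_dvd one_pos hd
    omega
  have F4 : (2 : ZMod n) ≠ 0 := by
    intro h
    have := Nat.le_of_dvd (by omega) ((hdvdIff 2).mp (by push_cast; exact h))
    omega
  have F0 : 2*I*(I-1) = 0 := by
    have h := (hdvdIff _).mpr hdvd
    rw [Nat.cast_mul, Nat.cast_mul, Nat.cast_sub (by omega : 1 ≤ i)] at h
    push_cast at h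
    linear_combination h
  -- distinctness
  have h01 : (0 : ZMod n) ≠ 1 := fun h => h10 h.symm
  have h0I : (0 : ZMod n) ≠ I := fun h => F1 h.symm
  have h0N : (0 : ZMod n) ≠ 1 - I := fun h => F2 (by linear_combination h)
  have h1I : (1 : ZMod n) ≠ I := fun h => F2 h.symm
  have h1N : (1 : ZMod n) ≠ 1 - I := fun h => F1 (by linear_combination h)
  have hIN : I ≠ 1 - I := fun h => F3 (by linear_combination h)
  -- basic facts about C
  have h0C : sr 0 ∈ C := by rw [hCdef]; left; rfl
  have h1C : sr 1 ∈ C := by rw [hCdef]; right; left; rfl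
  have hCsr : ∀ c ∈ C, ∃ j : ZMod n, c = sr j := by
    rw [hCdef]; rintro c (rfl | rfl | rfl | rfl) <;> exact ⟨_, rfl⟩
  have hCmem : ∀ v : ZMod n, sr v ∈ C ↔ (v = 0 ∨ v = 1 ∨ v = I ∨ v = 1 - I) := by
    intro v
    rw [hCdef]
    simp [DihedralGroup.sr.injEq]
  have hiC : sr I ∈ C := (hCmem I).mpr (by tauto)
  have hniC : sr (1-I) ∈ C := (hCmem (1-I)).mpr (by tauto)
  -- the unit w
  have hcop : Nat.Coprime (2*i-1) n := hgcd
  set w : (ZMod n)ˣ := ZMod.unitOfCoprime (2*i-1) hcop with hwdef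
  have hwv : (w : ZMod n) = ((2*i - 1 : ℕ) : ZMod n) := ZMod.coe_unitOfCoprime _ _
  have hw2 : (w : ZMod n) = 2*I - 1 := by
    rw [hwv, Nat.cast_sub (by omega : 1 ≤ 2*i)]
    push_cast
    ring
  have hanv : ((-1 : (ZMod n)ˣ) : ZMod n) = -1 := by simp
  set a := dihAut n (-1) 1 with hadef
  set b := dihAut n w (1-I) with hbdef
  have hab : a * b = dihAut n (-w) I := by
    rw [hadef, hbdef, dihAut_mul]
    exact dihAut_ext n (by simp) (by rw [hanv]; ring)
  have habv : ((-w : (ZMod n)ˣ) : ZMod n) = 1 - 2*I := by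
    rw [Units.val_neg, hw2]; ring
  -- involutions
  have haa : a * a = 1 := by
    rw [hadef, dihAut_mul]
    refine (dihAut_ext n ?_ ?_).trans (dihAut_one n)
    · simp
    · rw [hanv]; ring
  have hbb : b * b = 1 := by
    rw [hbdef, dihAut_mul]
    refine (dihAut_ext n ?_ ?_).trans (dihAut_one n)
    · rw [Units.val_mul, hw2, Units.val_one]; linear_combination 2*F0
    · rw [hw2]; linear_combination -F0
  have habab : (a*b) * (a*b) = 1 := by
    rw [hab, dihAut_mul]
    refine (dihAut_ext n ?_ ?_).trans (dihAut_one n)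
    · rw [Units.val_mul, habv, Units.val_one]; linear_combination 2*F0
    · rw [habv]; linear_combination -F0
  -- memberships
  have haC : a ∈ autSub C := by
    refine autSub_of_invol hCdef a haa ?_ ?_ ?_ ?_ <;>
      rw [hadef, dihAut_apply_sr, hanv] <;> rw [hCmem]
    · right; left; ring
    · left; ring
    · right; right; right; ring
    · right; right; left; ring
  have hbC : b ∈ autSub C := by
    refine autSub_of_invol hCdef b hbb ?_ ?_ ?_ ?_ <;>
      rw [hbdef, dihAut_apply_sr, hw2] <;> rw [hCmem]
    · right; right; right; ring
    · right; right; left; ring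
    · right; left; linear_combination F0
    · left; linear_combination -F0
  have habC : a * b ∈ autSub C := mul_mem haC hbC
  -- transitivity
  have habev : ∀ v t : ZMod n, (1-2*I)*v + I = t → (a*b) (sr v) = sr t := by
    intro v t h
    rw [hab, dihAut_apply_sr, habv, h]
  have haev : ∀ v t : ZMod n, -v + 1 = t → a (sr v) = sr t := by
    intro v t h
    rw [hadef, dihAut_apply_sr, hanv, ← h]
    congr 1
    ring
  have hbev : ∀ v t : ZMod n, (2*I-1)*v + (1-I) = t → b (sr v) = sr t := by
    intro v t h
    rw [hbdef, dihAut_apply_sr, hw2, h]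
  have htrans : ∀ c ∈ C, ∀ c' ∈ C, ∃ σ ∈ autSub C, σ c = c' := by
    intro c hc c' hc'
    rw [hCdef] at hc hc'
    simp only [Set.mem_insert_iff, Set.mem_singleton_iff] at hc hc'
    rcases hc with rfl | rfl | rfl | rfl <;> rcases hc' with rfl | rfl | rfl | rfl
    · exact ⟨1, one_mem _, rfl⟩
    · exact ⟨a, haC, haev 0 1 (by ring)⟩
    · exact ⟨a*b, habC, habev 0 I (by ring)⟩
    · exact ⟨b, hbC, hbev 0 (1-I) (by ring)⟩
    · exact ⟨a, haC, haev 1 0 (by ring)⟩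
    · exact ⟨1, one_mem _, rfl⟩
    · exact ⟨b, hbC, hbev 1 I (by ring)⟩
    · exact ⟨a*b, habC, habev 1 (1-I) (by ring)⟩
    · exact ⟨a*b, habC, habev I 0 (by linear_combination -F0)⟩
    · exact ⟨b, hbC, hbev I 1 (by linear_combination F0)⟩
    · exact ⟨1, one_mem _, rfl⟩
    · exact ⟨a, haC, haev I (1-I) (by ring)⟩
    · exact ⟨b, hbC, hbev (1-I) 0 (by linear_combination -F0)⟩
    · exact ⟨a*b, habC, habev (1-I) 1 (by linear_combination F0)⟩
    · exact ⟨a, haC, haev (1-I) I (by ring)⟩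
    · exact ⟨1, one_mem _, rfl⟩
  refine ⟨?_, ⟨?_, ?_, ?_, Or.inl htrans⟩, htrans, ?_, ?_⟩
  · -- ncard = 4
    rw [hCdef, Set.ncard_insert_of_notMem, Set.ncard_insert_of_notMem,
      Set.ncard_insert_of_notMem, Set.ncard_singleton]
    · simp only [Set.mem_singleton_iff, DihedralGroup.sr.injEq]
      exact hIN
    · simp only [Set.mem_insert_iff, Set.mem_singleton_iff, DihedralGroup.sr.injEq, not_or]
      exact ⟨h1I, h1N⟩
    · simp only [Set.mem_insert_iff, Set.mem_singleton_iff, DihedralGroup.sr.injEq, not_or]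
      exact ⟨h01, h0I, h0N⟩
  · -- 1 ∉ C
    rw [hCdef]
    simp [one_def, -r_zero]
  · -- inverse closed
    intro c hc
    obtain ⟨j, rfl⟩ := hCsr c hc
    rwa [inv_eq_of_mul_eq_one_right (sr_mul_self j)]
  · -- closure = ⊤
    have hr1mem : (r 1 : DihedralGroup n) ∈ Subgroup.closure C := by
      have h : (r 1 : DihedralGroup n) = sr 0 * sr 1 := by rw [sr_mul_sr, sub_zero]
      rw [h]
      exact mul_mem (Subgroup.subset_closure h0C) (Subgroup.subset_closure h1C)
    have hrmem : ∀ j : ZMod n, (r j : DihedralGroup n) ∈ Subgroup.closure C := by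
      intro j
      have hj : ((j.val : ℕ) : ZMod n) = j := ZMod.natCast_rightInverse j
      have h : (r j : DihedralGroup n) = r 1 ^ j.val := by rw [r_one_pow, hj]
      rw [h]
      exact pow_mem hr1mem _
    rw [Subgroup.eq_top_iff']
    intro g
    rcases g with j | j
    · exact hrmem j
    · have h : (sr j : DihedralGroup n) = sr 0 * r j := by rw [sr_mul_r, zero_add]
      rw [h]
      exact mul_mem (Subgroup.subset_closure h0C) (hrmem j)
  · -- special branch
    rintro ⟨h4, hior⟩
    have hn4 : 4 ≤ n := by omega
    have h2H : 2*((n/2 : ℕ) : ZMod n) = 0 := by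
      have h : ((2*(n/2) : ℕ) : ZMod n) = 0 := by
        rw [show 2*(n/2) = n by omega]
        exact ZMod.natCast_self n
      push_cast at h
      linear_combination h
    have hHH : ((n/2 : ℕ) : ZMod n) * ((n/2 : ℕ) : ZMod n) = 0 := by
      obtain ⟨a2, ha2⟩ : ∃ a2, n = 4*a2 := ⟨n/4, by omega⟩
      have h : ((n/2 * (n/2) : ℕ) : ZMod n) = 0 := by
        rw [hdvdIff]
        exact ⟨a2, by rw [show n/2 = 2*a2 by omega, ha2]; ring⟩
      push_cast at h
      linear_combination h
    have hH0 : ((n/2 : ℕ) : ZMod n) ≠ 0 := by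
      intro h
      have := Nat.le_of_dvd (by omega) ((hdvdIff _).mp h)
      omega
    have hH1 : ((n/2 : ℕ) : ZMod n) ≠ 1 := by
      intro h
      have h' : ((n/2 - 1 : ℕ) : ZMod n) = 0 := by
        rw [Nat.cast_sub (by omega : 1 ≤ n/2)]
        push_cast
        linear_combination h
      have := Nat.le_of_dvd (by omega) ((hdvdIff _).mp h')
      omega
    have hH10 : ((n/2 : ℕ) : ZMod n) + 1 ≠ 0 := by
      intro h
      have h' : ((n/2 + 1 : ℕ) : ZMod n) = 0 := by push_cast; linear_combination h
      have := Nat.le_of_dvd (by omega) ((hdvdIff _).mp h')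
      omega
    have hCH : C = {sr 0, sr 1, sr ((n/2 : ℕ) : ZMod n), sr (((n/2 : ℕ) : ZMod n) + 1)} := by
      rcases hior with hi | hi
      · have hIH : I = ((n/2 : ℕ) : ZMod n) := by rw [hIdef, hi]
        rw [hCdef, hIH, show (1 - ((n/2 : ℕ) : ZMod n) : ZMod n) = ((n/2 : ℕ) : ZMod n) + 1
          from by linear_combination -h2H]
      · have hIH : I = ((n/2 : ℕ) : ZMod n) + 1 := by rw [hIdef, hi]; push_cast; ring
        rw [hCdef, hIH, show (1 - (((n/2 : ℕ) : ZMod n) + 1) : ZMod n) = ((n/2 : ℕ) : ZMod n)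
          from by linear_combination -h2H]
        exact congrArg _ (congrArg _ (Set.pair_comm _ _))
    have hu1 : (((n/2 : ℕ) : ZMod n) + 1) * (((n/2 : ℕ) : ZMod n) + 1) = 1 := by
      linear_combination hHH + h2H
    refine ⟨⟨((n/2 : ℕ) : ZMod n) + 1, ((n/2 : ℕ) : ZMod n) + 1, hu1, hu1⟩, ?_, ?_⟩
    · show ((n/2 : ℕ) : ZMod n) + 1 = ((n / 2 + 1 : ℕ) : ZMod n)
      push_cast
      ring
    · set u : (ZMod n)ˣ := ⟨((n/2 : ℕ) : ZMod n) + 1, ((n/2 : ℕ) : ZMod n) + 1, hu1, hu1⟩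
        with hudef
      have huv : (u : ZMod n) = ((n/2 : ℕ) : ZMod n) + 1 := rfl
      have hCmemH : ∀ v : ZMod n, sr v ∈ C ↔
          (v = 0 ∨ v = 1 ∨ v = ((n/2 : ℕ) : ZMod n) ∨ v = ((n/2 : ℕ) : ZMod n) + 1) := by
        intro v
        rw [hCH]
        simp [DihedralGroup.sr.injEq]
      have hxx : dihAut n u 0 * dihAut n u 0 = 1 := by
        rw [dihAut_mul]
        refine (dihAut_ext n ?_ ?_).trans (dihAut_one n)
        · rw [Units.val_mul, huv, Units.val_one]
          linear_combination hHH + h2H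
        · rw [huv]; ring
      have hxC : dihAut n u 0 ∈ autSub C := by
        refine autSub_of_invol hCH (dihAut n u 0) hxx ?_ ?_ ?_ ?_ <;>
          rw [dihAut_apply_sr, huv] <;> rw [hCmemH]
        · left; ring
        · right; right; right; ring
        · right; right; left; linear_combination hHH
        · right; left; linear_combination hHH + h2H
      exact special_branch C ((n/2 : ℕ) : ZMod n) u huv hCH h2H hHH hH0 hH1 hH10 h10 F4
        hxC haC
  · -- generic branch
    intro hnot
    have hsp := special_of n i hn hi1 hi2
    have hno2 : ¬(2*I = 2 ∧ I*I = 1) := fun hc => hnot ⟨(hsp.2 hc).1, Or.inr (hsp.2 hc).2⟩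
    have hno3 : ¬(2*I = 0 ∧ I*I = 0) := fun hc => hnot ⟨(hsp.1 hc).1, Or.inl (hsp.1 hc).2⟩
    refine ⟨w, hwv, ?_, ?_⟩
    · exact (generic_branch C I w hCdef hw2 F0 F1 F2 F3 F4 h10 hno2 hno3 haC hbC).1
    · exact (generic_branch C I w hCdef hw2 F0 F1 F2 F3 F4 h10 hno2 hno3 haC hbC).2

end NETCayley
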